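/- Let (X, d) be a metric space, R, ρ ≥ 0, h : X → ℝ an R-Lipschitz classifier, and L : ℝ × ℝ → ℝ a ρ-Lipschitz loss function. Let μ and ν be Borel probability measures on X × ℝ such that (x, y) ↦ L(h(x), y) is integrable with respect to both μ and ν, and let γ be any coupling of μ and ν. Then |ε_μ(h) − ε_ν(h)| ≤ ρ·√(R² + 1) · ∫ d₂((x, y), (x′, y′)) dγ((x, y), (x′, y′)), where the right-hand side is a value in [0, ∞] and the inequality holds trivially if it is infinite. -/
import Mathlib


open MeasureTheory

/-- Let `h : X → ℝ` be an `R`-Lipschitz classifier, `L` a `ρ`-Lipschitz loss, and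
`μ, ν` Borel probability measures on `X × ℝ` for which `(x, y) ↦ L (h x) y` is
integrable.  For any coupling `γ` of `μ` and `ν`,
`|ε_μ(h) − ε_ν(h)| ≤ ρ·√(R²+1) · ∫ d₂((x,y),(x',y')) dγ`, where the right-hand
side is a value in `[0, ∞]` (the inequality holding trivially if it is `∞`). -/
theorem error_diff_le_coupling_cost {X : Type*} [MetricSpace X]
    [MeasurableSpace X] [BorelSpace X] (R ρ : ℝ) (hR : 0 ≤ R) (hρ : 0 ≤ ρ)
    (h : X → ℝ) (hLip : ∀ x x' : X, |h x - h x'| ≤ R * dist x x')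
    (L : ℝ → ℝ → ℝ)
    (hL₁ : ∀ a b y : ℝ, |L a y - L b y| ≤ ρ * |a - b|)
    (hL₂ : ∀ a y y' : ℝ, |L a y - L a y'| ≤ ρ * |y - y'|)
    (μ ν : Measure (X × ℝ)) [IsProbabilityMeasure μ] [IsProbabilityMeasure ν]
    (hμint : Integrable (fun z : X × ℝ => L (h z.1) z.2) μ)
    (hνint : Integrable (fun z : X × ℝ => L (h z.1) z.2) ν)
    (γ : Measure ((X × ℝ) × (X × ℝ))) [IsProbabilityMeasure γ]
    (hγ₁ : γ.map Prod.fst = μ) (hγ₂ : γ.map Prod.snd = ν) :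
    ENNReal.ofReal |(∫ z, L (h z.1) z.2 ∂μ) - ∫ z, L (h z.1) z.2 ∂ν| ≤
      ENNReal.ofReal (ρ * Real.sqrt (R ^ 2 + 1)) *
        ∫⁻ w, ENNReal.ofReal
          (Real.sqrt (dist w.1.1 w.2.1 ^ 2 + (w.1.2 - w.2.2) ^ 2)) ∂γ := by
  set f : X × ℝ → ℝ := fun z => L (h z.1) z.2 with hf
  -- continuity of L
  have hLcont : Continuous fun p : ℝ × ℝ => L p.1 p.2 := by
    have : LipschitzWith (2 * ρ.toNNReal) fun p : ℝ × ℝ => L p.1 p.2 := by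
      intro p q
      rw [edist_dist, edist_dist, ← ENNReal.ofReal_coe_nnreal,
        ← ENNReal.ofReal_mul (by positivity)]
      apply ENNReal.ofReal_le_ofReal
      have h1 := hL₁ p.1 q.1 p.2
      have h2 := hL₂ q.1 p.2 q.2
      have hb : dist (L p.1 p.2) (L q.1 q.2) ≤ ρ * |p.1 - q.1| + ρ * |p.2 - q.2| := by
        rw [Real.dist_eq]
        calc |L p.1 p.2 - L q.1 q.2|
            ≤ |L p.1 p.2 - L q.1 p.2| + |L q.1 p.2 - L q.1 q.2| := abs_sub_le _ _ _
          _ ≤ ρ * |p.1 - q.1| + ρ * |p.2 - q.2| := add_le_add h1 h2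
      refine hb.trans ?_
      have d1 : |p.1 - q.1| ≤ dist p q := by
        rw [← Real.dist_eq, Prod.dist_eq]; exact le_max_left _ _
      have d2 : |p.2 - q.2| ≤ dist p q := by
        rw [← Real.dist_eq, Prod.dist_eq]; exact le_max_right _ _
      have hcoe : ((2 * ρ.toNNReal : NNReal) : ℝ) = 2 * ρ := by
        push_cast [Real.coe_toNNReal ρ hρ]; ring
      rw [hcoe]
      nlinarith [dist_nonneg (x := p) (y := q)]
    exact this.continuous
  have hhcont : Continuous h := by
    have : LipschitzWith R.toNNReal h := by
      intro x x'
      rw [edist_dist, edist_dist, ← ENNReal.ofReal_coe_nnreal,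
        ← ENNReal.ofReal_mul (by positivity)]
      apply ENNReal.ofReal_le_ofReal
      rw [Real.dist_eq, Real.coe_toNNReal R hR]
      exact hLip x x'
    exact this.continuous
  have hfcont : Continuous f := hLcont.comp ((hhcont.comp continuous_fst).prodMk continuous_snd)
  -- pointwise bound
  set c : ℝ := ρ * Real.sqrt (R ^ 2 + 1) with hc
  have hcnn : 0 ≤ c := by positivity
  have key : ∀ w : (X × ℝ) × (X × ℝ), |f w.1 - f w.2| ≤
      c * Real.sqrt (dist w.1.1 w.2.1 ^ 2 + (w.1.2 - w.2.2) ^ 2) := by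
    rintro ⟨⟨x, y⟩, ⟨x', y'⟩⟩
    simp only [f]
    set d := dist x x' with hd
    set t := |y - y'| with ht
    have hdnn : 0 ≤ d := dist_nonneg
    have htnn : 0 ≤ t := abs_nonneg _
    have step1 : |L (h x) y - L (h x') y'| ≤ ρ * (R * d) + ρ * t := by
      calc |L (h x) y - L (h x') y'|
          ≤ |L (h x) y - L (h x') y| + |L (h x') y - L (h x') y'| := abs_sub_le _ _ _
        _ ≤ ρ * |h x - h x'| + ρ * |y - y'| := add_le_add (hL₁ _ _ _) (hL₂ _ _ _)
        _ ≤ ρ * (R * d) + ρ * t :=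
            add_le_add (mul_le_mul_of_nonneg_left (hLip x x') hρ) le_rfl
    refine step1.trans ?_
    have cs : R * d + t ≤ Real.sqrt (R ^ 2 + 1) * Real.sqrt (d ^ 2 + t ^ 2) := by
      rw [← Real.sqrt_mul (by positivity)]
      have h1 : Real.sqrt ((R * d + t) ^ 2) ≤ Real.sqrt ((R ^ 2 + 1) * (d ^ 2 + t ^ 2)) :=
        Real.sqrt_le_sqrt (by nlinarith [sq_nonneg (R * t - d)])
      rwa [Real.sqrt_sq (by positivity)] at h1
    have : |y - y'| ^ 2 = (y - y') ^ 2 := sq_abs _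
    calc ρ * (R * d) + ρ * t = ρ * (R * d + t) := by ring
      _ ≤ ρ * (Real.sqrt (R ^ 2 + 1) * Real.sqrt (d ^ 2 + t ^ 2)) :=
          mul_le_mul_of_nonneg_left cs hρ
      _ = c * Real.sqrt (d ^ 2 + (y - y') ^ 2) := by
          rw [hc, ← this]; ring
  -- integrability of components
  have hmfst : AEMeasurable (Prod.fst : (X × ℝ) × (X × ℝ) → X × ℝ) γ :=
    measurable_fst.aemeasurable
  have hmsnd : AEMeasurable (Prod.snd : (X × ℝ) × (X × ℝ) → X × ℝ) γ :=
    measurable_snd.aemeasurable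
  have hint1 : Integrable (fun w : (X × ℝ) × (X × ℝ) => f w.1) γ := by
    rw [← Function.comp_def]
    exact (integrable_map_measure hfcont.aestronglyMeasurable hmfst).mp (hγ₁ ▸ hμint)
  have hint2 : Integrable (fun w : (X × ℝ) × (X × ℝ) => f w.2) γ := by
    rw [← Function.comp_def]
    exact (integrable_map_measure hfcont.aestronglyMeasurable hmsnd).mp (hγ₂ ▸ hνint)
  have e1 : (∫ z, f z ∂μ) = ∫ w, f w.1 ∂γ := by
    rw [← hγ₁, integral_map hmfst hfcont.aestronglyMeasurable]
  have e2 : (∫ z, f z ∂ν) = ∫ w, f w.2 ∂γ := by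
    rw [← hγ₂, integral_map hmsnd hfcont.aestronglyMeasurable]
  have ediff : (∫ z, f z ∂μ) - (∫ z, f z ∂ν) = ∫ w, f w.1 - f w.2 ∂γ := by
    rw [e1, e2, integral_sub hint1 hint2]
  calc ENNReal.ofReal |(∫ z, f z ∂μ) - ∫ z, f z ∂ν|
      = ENNReal.ofReal |∫ w, f w.1 - f w.2 ∂γ| := by rw [ediff]
    _ ≤ ENNReal.ofReal (∫ w, |f w.1 - f w.2| ∂γ) := by
        apply ENNReal.ofReal_le_ofReal
        simpa [Real.norm_eq_abs] using
          norm_integral_le_integral_norm (fun w : (X × ℝ) × (X × ℝ) => f w.1 - f w.2) (μ := γ)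
    _ = ∫⁻ w, ENNReal.ofReal |f w.1 - f w.2| ∂γ :=
        ofReal_integral_eq_lintegral_ofReal (hint1.sub hint2).abs
          (Filter.Eventually.of_forall fun w => abs_nonneg _)
    _ ≤ ∫⁻ w, ENNReal.ofReal (c * Real.sqrt (dist w.1.1 w.2.1 ^ 2 + (w.1.2 - w.2.2) ^ 2)) ∂γ :=
        lintegral_mono fun w => ENNReal.ofReal_le_ofReal (key w)
    _ = ENNReal.ofReal c *
        ∫⁻ w, ENNReal.ofReal (Real.sqrt (dist w.1.1 w.2.1 ^ 2 + (w.1.2 - w.2.2) ^ 2)) ∂γ := by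
        simp_rw [ENNReal.ofReal_mul hcnn]
        exact lintegral_const_mul' _ _ ENNReal.ofReal_ne_top
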